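/- Rigidity of unimodular Doob walks of energy d: let (G, P, o) be a unimodular random rooted d-regular graph with a reversible-structure Markov kernel P satisfying p_{xy} p_{yx} = 1/d² for every edge (x,y). Then the Mass-Transport Principle identity E[∑_{x∼o} p_{ox}] = E[∑_{x∼o} p_{xo}] forces p_{ox} = 1/d for all x ∼ o, almost surely; i.e., P is the simple random walk. -/

import Mathlib

open MeasureTheory

/-- rigidity of unimodular Doob walks of energy `d`. Let `(X, μ)` be a
probability space carrying a measured `d`-regular graph structure (each point `x` has a
set `N x` of `d` neighbors, symmetrically), and let `p` be a nearest-neighbor Markov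
kernel with `p_{xy} p_{yx} = 1/d²` on every edge (Doob walk of energy `d`). If the
Mass-Transport Principle holds, then almost surely `p_{xy} = 1/d` for every neighbor `y`
of `x`; i.e. `p` is the simple random walk. -/
theorem unimodular_doob_walk_rigidity
    {X : Type*} [MeasurableSpace X] (μ : Measure X) [IsProbabilityMeasure μ]
    (d : ℕ) (hd : 1 ≤ d)
    (N : X → Finset X)
    (hcard : ∀ x, (N x).card = d)
    (hsymm : ∀ x y, y ∈ N x ↔ x ∈ N y)
    (p : X → X → ℝ)
    (hppos : ∀ x y, y ∈ N x → 0 < p x y)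
    (hrow : ∀ x, ∑ y ∈ N x, p x y = 1)
    (hdoob : ∀ x y, y ∈ N x → p x y * p y x = 1 / (d : ℝ)^2)
    (hMTP : ∀ f : X → X → ℝ, (∀ x y, 0 ≤ f x y) →
      ∫ x, (∑ y ∈ N x, f x y) ∂μ = ∫ x, (∑ y ∈ N x, f y x) ∂μ) :
    ∀ᵐ x ∂μ, ∀ y ∈ N x, p x y = 1 / (d : ℝ) := by
  have hd0 : (d:ℝ) ≠ 0 := Nat.cast_ne_zero.mpr (by omega)
  set g : X → ℝ := fun x => ∑ y ∈ N x, p y x with hg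
  -- key pointwise identity: g x = 1 + sum of squares
  have key : ∀ x, g x = 1 + ∑ y ∈ N x, (1/((d:ℝ)*Real.sqrt (p x y)) - Real.sqrt (p x y))^2 := by
    intro x
    have hterm : ∀ y ∈ N x,
        p y x = (1/((d:ℝ)*Real.sqrt (p x y)) - Real.sqrt (p x y))^2 + 2/(d:ℝ) - p x y := by
      intro y hy
      have ha := hppos x y hy
      have hsq : Real.sqrt (p x y) ^ 2 = p x y := Real.sq_sqrt ha.le
      have hs0 : Real.sqrt (p x y) ≠ 0 := (Real.sqrt_pos.mpr ha).ne'
      have hpyx : p y x = 1/((d:ℝ)^2 * p x y) := by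
        have h := hdoob x y hy
        field_simp at h ⊢
        linarith
      have hid : 1/((d:ℝ)^2 * Real.sqrt (p x y)^2)
          = (1/((d:ℝ)*Real.sqrt (p x y)) - Real.sqrt (p x y))^2 + 2/(d:ℝ)
            - Real.sqrt (p x y)^2 := by
        field_simp
        ring
      rw [hsq] at hid
      rw [hpyx, hid]
    have : g x = ∑ y ∈ N x,
        ((1/((d:ℝ)*Real.sqrt (p x y)) - Real.sqrt (p x y))^2 + 2/(d:ℝ) - p x y) :=
      Finset.sum_congr rfl hterm
    rw [this, Finset.sum_sub_distrib, Finset.sum_add_distrib, hrow x,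
      Finset.sum_const, hcard x]
    rw [nsmul_eq_mul, mul_div_cancel₀ _ hd0]
    ring
  -- MTP with f = max (p x y) 0
  have hmtp := hMTP (fun x y => max (p x y) 0) (fun x y => le_max_right _ _)
  have hL : (fun x => ∑ y ∈ N x, max (p x y) 0) = fun _ => (1:ℝ) := by
    funext x
    rw [← hrow x]
    exact Finset.sum_congr rfl fun y hy => max_eq_left (hppos x y hy).le
  have hR : (fun x => ∑ y ∈ N x, max (p y x) 0) = g := by
    funext x
    exact Finset.sum_congr rfl fun y hy =>
      max_eq_left (hppos y x ((hsymm x y).mp hy)).le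
  rw [hL, hR] at hmtp
  simp only [integral_const, measure_univ, ENNReal.toReal_one, smul_eq_mul, one_mul] at hmtp
  -- integrability of g
  have hIntg : Integrable g μ := by
    by_contra h
    rw [integral_undef h] at hmtp
    norm_num at hmtp
  -- φ = g - 1 is nonneg with zero integral
  have hφnn : 0 ≤ fun x => g x - 1 := by
    intro x
    have := key x
    simp only [Pi.zero_apply]
    have hs : 0 ≤ ∑ y ∈ N x, (1/((d:ℝ)*Real.sqrt (p x y)) - Real.sqrt (p x y))^2 :=
      Finset.sum_nonneg fun y _ => sq_nonneg _
    linarith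
  have hφint : Integrable (fun x => g x - 1) μ := hIntg.sub (integrable_const 1)
  have hφ0 : ∫ x, (g x - 1) ∂μ = 0 := by
    rw [integral_sub hIntg (integrable_const 1)]
    simp [← hmtp]
  have hae : (fun x => g x - 1) =ᵐ[μ] 0 :=
    (integral_eq_zero_iff_of_nonneg hφnn hφint).mp hφ0
  filter_upwards [hae] with x hx
  intro y hy
  have hsum0 : ∑ y ∈ N x, (1/((d:ℝ)*Real.sqrt (p x y)) - Real.sqrt (p x y))^2 = 0 := by
    have := key x
    have hx' : g x - 1 = 0 := hx
    linarith
  have hterm0 := (Finset.sum_eq_zero_iff_of_nonneg (fun y _ => sq_nonneg _)).mp hsum0 y hy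
  have heq : 1/((d:ℝ)*Real.sqrt (p x y)) - Real.sqrt (p x y) = 0 := by
    exact pow_eq_zero_iff (n := 2) (by norm_num) |>.mp hterm0
  have ha := hppos x y hy
  have hsq : Real.sqrt (p x y) ^ 2 = p x y := Real.sq_sqrt ha.le
  have hs0 : Real.sqrt (p x y) ≠ 0 := (Real.sqrt_pos.mpr ha).ne'
  have : 1 = (d:ℝ) * Real.sqrt (p x y) * Real.sqrt (p x y) := by
    field_simp at heq
    linarith
  rw [eq_div_iff hd0]
  nlinarith [hsq]
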